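/- Let μ be a minimiser of I over probability measures on ℝ². Then for every probability measure ν on ℝ² with compact support and I(ν) < +∞, one has ∫_{ℝ²} ((V∗μ)(x) + |x|²/2) dν(x) ≥ ∫_{ℝ²} ((V∗μ)(x) + |x|²/2) dμ(x). -/

import Mathlib

open MeasureTheory Real
open scoped ENNReal Classical FourierTransform RealInnerProductSpace ComplexOrder

noncomputable section

abbrev E2 : Type := EuclideanSpace ℝ (Fin 2)

/-- The anisotropic interaction potential `V(x) = -log|x| + x₁²/|x|²`
(with the junk value `V 0 = 0`; the set where the true value `+∞` matters
is handled separately). -/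
def V (x : E2) : ℝ := -Real.log ‖x‖ + (x 0) ^ 2 / ‖x‖ ^ 2

/-- A measure has compact support. -/
def HasCompactMeasureSupport (μ : Measure E2) : Prop :=
  ∃ K : Set E2, IsCompact K ∧ μ Kᶜ = 0

/-- Finite interaction energy `∬ V(x-y) dμ(x) dμ(y) < ∞`: the diagonal
(where `V = +∞`) is null and `V(x-y)` is integrable. -/
def FiniteInteractionEnergy (μ : Measure E2) : Prop :=
  (μ.prod μ) {p : E2 × E2 | p.1 = p.2} = 0 ∧
    Integrable (fun p : E2 × E2 => V (p.1 - p.2)) (μ.prod μ)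

/-- The interaction energy `∬ V(x-y) dμ(x) dμ(y)` as a real number. -/
def interEnergy (μ ν : Measure E2) : ℝ := ∫ p : E2 × E2, V (p.1 - p.2) ∂(μ.prod ν)

/-- The total energy `I(μ) = ∬ V(x-y) dμdμ + ∫ |x|² dμ`, with values in `[0,∞]`,
written as `∬ (V(x-y) + (|x|²+|y|²)/2) dμdμ` (valid since `μ` is a probability
measure); the integrand is `+∞` on the diagonal and nonnegative elsewhere. -/
def Ienergy (μ : Measure E2) : ℝ≥0∞ :=
  ∫⁻ p : E2 × E2,
    (if p.1 = p.2 then (⊤ : ℝ≥0∞)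
      else ENNReal.ofReal (V (p.1 - p.2) + (‖p.1‖ ^ 2 + ‖p.2‖ ^ 2) / 2)) ∂(μ.prod μ)

/-- The semi-circle law `m₁ = (1/π) δ₀ ⊗ √(2-t²) H¹⌞(-√2,√2)` on `ℝ²`. -/
def m1 : Measure E2 :=
  Measure.map (fun t : ℝ => (WithLp.toLp 2 ![0, t] : E2))
    ((volume.restrict (Set.Ioo (-Real.sqrt 2) (Real.sqrt 2))).withDensity
      (fun t => ENNReal.ofReal (Real.sqrt (2 - t ^ 2) / Real.pi)))

/-- The potential `(V ∗ μ)(x) = ∫ V(x-y) dμ(y)`. -/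
def Vconv (μ : Measure E2) (x : E2) : ℝ := ∫ y, V (x - y) ∂μ

/-- The support of a measure: points all of whose neighbourhoods have
positive measure. -/
def msupp (μ : Measure E2) : Set E2 := {x : E2 | ∀ U ∈ nhds x, 0 < μ U}






lemma log_le_316 (r : ℝ) (hr : 0 < r) : Real.log r ≤ (3/16) * r ^ 2 := by
  have h1 : Real.log (r ^ 2 / Real.exp 1) ≤ r ^ 2 / Real.exp 1 - 1 :=
    Real.log_le_sub_one_of_pos (by positivity)
  rw [Real.log_div (by positivity) (Real.exp_ne_zero 1), Real.log_exp] at h1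
  have h2 : Real.log (r ^ 2) = 2 * Real.log r := by
    rw [Real.log_pow]; push_cast; ring
  have he : (2.7182818283 : ℝ) < Real.exp 1 := Real.exp_one_gt_d9
  have hep : (0:ℝ) < Real.exp 1 := Real.exp_pos 1
  have h3 : r ^ 2 / Real.exp 1 ≤ r ^ 2 * (10/27) := by
    rw [div_le_iff₀ hep]
    nlinarith [sq_nonneg r]
  have h4 : 2 * Real.log r ≤ r ^ 2 * (10/27) := by rw [h2] at h1; linarith
  nlinarith [sq_nonneg r]

lemma norm_sq_eq (x : E2) : ‖x‖ ^ 2 = (x 0) ^ 2 + (x 1) ^ 2 := by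
  rw [EuclideanSpace.norm_eq, Real.sq_sqrt (by positivity)]
  simp [Fin.sum_univ_two]

lemma V_lower (x : E2) : -Real.log ‖x‖ ≤ V x := by
  have : 0 ≤ (x 0) ^ 2 / ‖x‖ ^ 2 := by positivity
  simp only [V]; linarith

lemma V_upper (x : E2) : V x ≤ -Real.log ‖x‖ + 1 := by
  simp only [V]
  rcases eq_or_ne x 0 with h | h
  · simp [h]
  · have hn : 0 < ‖x‖ := norm_pos_iff.2 h
    have h2 : (x 0)^2 ≤ ‖x‖^2 := by
      rw [norm_sq_eq]; nlinarith [sq_nonneg (x 1)]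
    have : (x 0)^2 / ‖x‖^2 ≤ 1 := by
      rw [div_le_one (by positivity)]; exact h2
    linarith

lemma V_neg_eq (x : E2) : V (-x) = V x := by
  simp only [V, norm_neg]
  congr 2
  have : (-x) 0 = -(x 0) := rfl
  rw [this]; ring

lemma sub_norm_sq_le (x y : E2) : ‖x - y‖ ^ 2 ≤ 2 * (‖x‖ ^ 2 + ‖y‖ ^ 2) := by
  have h := norm_sub_le x y
  have h2 : ‖x - y‖^2 ≤ (‖x‖ + ‖y‖)^2 := by
    apply sq_le_sq' <;> nlinarith [norm_nonneg x, norm_nonneg y, norm_nonneg (x - y)]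
  nlinarith [sq_nonneg (‖x‖ - ‖y‖)]

-- main pointwise lower bound, log part
lemma key_lower_log (x y : E2) (h : x ≠ y) :
    max (-Real.log ‖x - y‖) 0 ≤ V (x - y) + (‖x‖ ^ 2 + ‖y‖ ^ 2) / 2 := by
  have hz : x - y ≠ 0 := sub_ne_zero.2 h
  have hr : 0 < ‖x - y‖ := norm_pos_iff.2 hz
  have hlog := log_le_316 _ hr
  have hq := sub_norm_sq_le x y
  have hV := V_lower (x - y)
  rcases le_total (-Real.log ‖x - y‖) 0 with hc | hc
  · rw [max_eq_right hc]; nlinarith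
  · rw [max_eq_left hc]; nlinarith [sq_nonneg ‖x - y‖, norm_nonneg x, norm_nonneg y,
      sq_nonneg (x 0), sq_nonneg ‖x‖, sq_nonneg ‖y‖]

-- main pointwise lower bound, moment part
lemma key_lower_quad (x y : E2) (h : x ≠ y) :
    (‖x‖ ^ 2 + ‖y‖ ^ 2) / 8 ≤ V (x - y) + (‖x‖ ^ 2 + ‖y‖ ^ 2) / 2 := by
  have hz : x - y ≠ 0 := sub_ne_zero.2 h
  have hr : 0 < ‖x - y‖ := norm_pos_iff.2 hz
  have hlog := log_le_316 _ hr
  have hq := sub_norm_sq_le x y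
  have hV := V_lower (x - y)
  nlinarith

-- upper bound
lemma key_upper (x y : E2) (h : x ≠ y) :
    V (x - y) + (‖x‖ ^ 2 + ‖y‖ ^ 2) / 2
      ≤ 1 + max (-Real.log ‖x - y‖) 0 + (‖x‖ ^ 2 + ‖y‖ ^ 2) / 2 := by
  have hV := V_upper (x - y)
  have : -Real.log ‖x - y‖ ≤ max (-Real.log ‖x - y‖) 0 := le_max_left _ _
  linarith

lemma measurable_V : Measurable V := by
  apply Measurable.add
  · exact (Real.measurable_log.comp measurable_norm).neg
  · have h0 : Measurable fun x : E2 => x 0 := (measurable_pi_apply 0).comp (WithLp.measurable_ofLp 2 _)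
    have h1 : Measurable fun x : E2 => ‖x‖ := measurable_norm
    exact (h0.pow_const 2).div (h1.pow_const 2)




lemma coord_abs_le (z : E2) (i : Fin 2) : |z i| ≤ ‖z‖ := by
  have h : (z i) ^ 2 ≤ ‖z‖ ^ 2 := by
    rw [norm_sq_eq]
    fin_cases i
    · exact le_add_of_nonneg_right (sq_nonneg _)
    · exact le_add_of_nonneg_left (sq_nonneg _)
  have := Real.sqrt_le_sqrt h
  rwa [Real.sqrt_sq_eq_abs, Real.sqrt_sq (norm_nonneg z)] at this

lemma sub_apply' (x y : E2) (i : Fin 2) : (x - y) i = x i - y i := rfl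

lemma floor_cast_eq (M : ℝ) (hM : 0 ≤ M) : ((⌊M⌋.toNat : ℕ) : ℝ) = ((⌊M⌋ : ℤ) : ℝ) := by
  have hfl : (0:ℤ) ≤ ⌊M⌋ := Int.floor_nonneg.2 hM
  exact_mod_cast congrArg (Int.cast : ℤ → ℝ) (Int.toNat_of_nonneg hfl)

lemma tsum_ind_lower (M : ℝ) :
    ENNReal.ofReal M ≤ ∑' n : ℕ, (if (n : ℝ) ≤ M then (1 : ℝ≥0∞) else 0) := by
  rcases le_or_gt M 0 with hM | hM
  · simp [ENNReal.ofReal_eq_zero.2 hM]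
  · set N := ⌊M⌋.toNat + 1 with hN
    have hcast := floor_cast_eq M hM.le
    have hone : ∀ n ∈ Finset.range N, (if (n : ℝ) ≤ M then (1 : ℝ≥0∞) else 0) = 1 := by
      intro n hn
      rw [if_pos]
      have hn' : n ≤ ⌊M⌋.toNat := Nat.lt_succ_iff.mp (Finset.mem_range.mp hn)
      have h1 : (n : ℝ) ≤ ((⌊M⌋.toNat : ℕ) : ℝ) := by exact_mod_cast hn'
      have h2 := Int.floor_le M
      linarith [hcast ▸ h1]
    have hsum : ∑ n ∈ Finset.range N, (if (n : ℝ) ≤ M then (1 : ℝ≥0∞) else 0) = N := by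
      rw [Finset.sum_congr rfl hone]; simp
    have hMN : M ≤ (N : ℝ) := by
      have h1 : M < ((⌊M⌋ : ℤ) : ℝ) + 1 := Int.lt_floor_add_one M
      have h2 : ((N : ℕ) : ℝ) = ((⌊M⌋.toNat : ℕ) : ℝ) + 1 := by push_cast [hN]; ring
      rw [h2, hcast]; linarith
    calc ENNReal.ofReal M ≤ ENNReal.ofReal (N : ℝ) := ENNReal.ofReal_le_ofReal hMN
      _ = (N : ℝ≥0∞) := ENNReal.ofReal_natCast N
      _ = ∑ n ∈ Finset.range N, (if (n : ℝ) ≤ M then (1 : ℝ≥0∞) else 0) := hsum.symm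
      _ ≤ _ := ENNReal.sum_le_tsum _

lemma tsum_ind_upper (M : ℝ) :
    ∑' n : ℕ, (if (n : ℝ) ≤ M then (1 : ℝ≥0∞) else 0) ≤ ENNReal.ofReal (M + 1) := by
  rcases lt_or_ge M 0 with hM | hM
  · have h0 : ∀ n : ℕ, (if (n : ℝ) ≤ M then (1 : ℝ≥0∞) else 0) = 0 := fun n => by
      rw [if_neg]; push_neg
      calc M < 0 := hM
        _ ≤ n := Nat.cast_nonneg n
    simp [h0]
  · set N := ⌊M⌋.toNat + 1 with hN
    have hcast := floor_cast_eq M hM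
    have hvanish : ∀ n ∉ Finset.range N, (if (n : ℝ) ≤ M then (1 : ℝ≥0∞) else 0) = 0 := by
      intro n hn
      rw [if_neg]
      push_neg
      have hn' : ⌊M⌋.toNat + 1 ≤ n := by
        simpa [Finset.mem_range, not_lt, hN] using hn
      have h1 : M < ((⌊M⌋ : ℤ) : ℝ) + 1 := Int.lt_floor_add_one M
      have h3 : ((⌊M⌋.toNat : ℕ) : ℝ) + 1 ≤ (n : ℝ) := by exact_mod_cast hn'
      rw [hcast] at h3; linarith
    rw [tsum_eq_sum hvanish]
    calc ∑ n ∈ Finset.range N, (if (n : ℝ) ≤ M then (1 : ℝ≥0∞) else 0)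
        ≤ ∑ _n ∈ Finset.range N, (1 : ℝ≥0∞) := Finset.sum_le_sum (fun n _ => by split <;> simp)
      _ = (N : ℝ≥0∞) := by simp
      _ ≤ ENNReal.ofReal (M + 1) := by
          rw [← ENNReal.ofReal_natCast]
          apply ENNReal.ofReal_le_ofReal
          have h2 : ((N : ℕ) : ℝ) = ((⌊M⌋.toNat : ℕ) : ℝ) + 1 := by push_cast [hN]; ring
          rw [h2, hcast]
          linarith [Int.floor_le M]
lemma mul_le_add_sq (a b : ℝ≥0∞) : a * b ≤ a * a + b * b := by
  rcases le_total a b with h | h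
  · calc a * b ≤ b * b := mul_le_mul_left h b
      _ ≤ a * a + b * b := le_add_self
  · calc a * b ≤ a * a := mul_le_mul_right h a
      _ ≤ a * a + b * b := le_self_add

lemma floor_diff_mem {u v : ℝ} (h : |u - v| ≤ 1) : ⌊u⌋ - ⌊v⌋ ∈ Finset.Icc (-1 : ℤ) 1 := by
  rw [abs_le] at h
  have h1 : u ≤ v + 1 := by linarith [h.2]
  have h2 : v ≤ u + 1 := by linarith [h.1]
  have h3 : ⌊u⌋ ≤ ⌊v + 1⌋ := Int.floor_le_floor h1
  have h4 : ⌊v⌋ ≤ ⌊u + 1⌋ := Int.floor_le_floor h2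
  rw [show (1:ℝ) = ((1:ℤ):ℝ) by norm_num, Int.floor_add_intCast] at h3 h4
  rw [Finset.mem_Icc]; omega

lemma grid_bound (μ ν : Measure E2) [IsProbabilityMeasure μ] [IsProbabilityMeasure ν]
    {t : ℝ} (ht : 0 < t) :
    (μ.prod ν) {p : E2 × E2 | ‖p.1 - p.2‖ ≤ t} ≤
      9 * ((μ.prod μ) {p : E2 × E2 | ‖p.1 - p.2‖ ≤ 2 * t}
        + (ν.prod ν) {p : E2 × E2 | ‖p.1 - p.2‖ ≤ 2 * t}) := by
  set A : ℤ × ℤ → Set E2 := fun k => {x : E2 | ⌊x 0 / t⌋ = k.1 ∧ ⌊x 1 / t⌋ = k.2} with hA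
  have hc0 : Measurable fun x : E2 => x 0 := (measurable_pi_apply _).comp (WithLp.measurable_ofLp 2 _)
  have hc1 : Measurable fun x : E2 => x 1 := (measurable_pi_apply _).comp (WithLp.measurable_ofLp 2 _)
  have hm0 : Measurable fun x : E2 => ⌊x 0 / t⌋ := Int.measurable_floor.comp (hc0.div_const t)
  have hm1 : Measurable fun x : E2 => ⌊x 1 / t⌋ := Int.measurable_floor.comp (hc1.div_const t)
  have hAm : ∀ k, MeasurableSet (A k) := fun k =>
    (hm0 (measurableSet_singleton k.1)).inter (hm1 (measurableSet_singleton k.2))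
  -- points in the same cell are at distance ≤ 2t
  have hsame : ∀ k : ℤ × ℤ, ∀ x ∈ A k, ∀ y ∈ A k, ‖x - y‖ ≤ 2 * t := by
    intro k x hx y hy
    have hco : ∀ i : Fin 2, |x i - y i| < t := by
      intro i
      have hfe : ⌊x i / t⌋ = ⌊y i / t⌋ := by
        fin_cases i
        · exact hx.1.trans hy.1.symm
        · exact hx.2.trans hy.2.symm
      have habs : |x i / t - y i / t| < 1 := Int.abs_sub_lt_one_of_floor_eq_floor hfe
      have h2 : x i - y i = (x i / t - y i / t) * t := by field_simp
      rw [h2, abs_mul, abs_of_pos ht]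
      calc |x i / t - y i / t| * t < 1 * t := mul_lt_mul_of_pos_right habs ht
        _ = t := one_mul t
    have hsq : ‖x - y‖ ^ 2 ≤ 2 * t ^ 2 := by
      rw [norm_sq_eq, sub_apply', sub_apply']
      have h0 := hco 0
      have h1 := hco 1
      nlinarith [abs_nonneg (x 0 - y 0), abs_nonneg (x 1 - y 1), sq_abs (x 0 - y 0),
        sq_abs (x 1 - y 1)]
    nlinarith [norm_nonneg (x - y)]
  -- cells are pairwise disjoint
  have hdisj : Pairwise (Function.onFun Disjoint fun k => (A k) ×ˢ (A k)) := by
    intro k k' hkk'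
    simp only [Function.onFun, Set.disjoint_left]
    rintro ⟨x, y⟩ ⟨hx, _⟩ ⟨hx', _⟩
    exact hkk' (by rw [← Prod.mk.eta (p := k), ← Prod.mk.eta (p := k')]
                   exact congrArg₂ Prod.mk (hx.1.symm.trans hx'.1) (hx.2.symm.trans hx'.2))
  set D : Finset (ℤ × ℤ) := Finset.Icc (-1 : ℤ) 1 ×ˢ Finset.Icc (-1 : ℤ) 1 with hD
  -- the covering
  have hcover : {p : E2 × E2 | ‖p.1 - p.2‖ ≤ t} ⊆
      ⋃ d ∈ D, ⋃ k : ℤ × ℤ, (A (k + d)) ×ˢ (A k) := by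
    rintro ⟨x, y⟩ hp
    simp only [Set.mem_setOf_eq] at hp
    have hcomp : ∀ i : Fin 2, |x i / t - y i / t| ≤ 1 := by
      intro i
      have h1 : |x i - y i| ≤ t := (coord_abs_le (x - y) i).trans hp
      rw [show x i / t - y i / t = (x i - y i) / t by ring, abs_div, abs_of_pos ht,
        div_le_one ht]
      exact h1
    set d : ℤ × ℤ := (⌊x 0 / t⌋ - ⌊y 0 / t⌋, ⌊x 1 / t⌋ - ⌊y 1 / t⌋) with hd
    set k : ℤ × ℤ := (⌊y 0 / t⌋, ⌊y 1 / t⌋) with hk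
    have hdD : d ∈ D := by
      rw [hD, Finset.mem_product]
      exact ⟨floor_diff_mem (hcomp 0), floor_diff_mem (hcomp 1)⟩
    simp only [Set.mem_iUnion]
    refine ⟨d, hdD, k, ?_, ?_⟩
    · constructor
      · show ⌊x 0 / t⌋ = k.1 + d.1; rw [hk, hd]; ring
      · show ⌊x 1 / t⌋ = k.2 + d.2; rw [hk, hd]; ring
    · exact ⟨rfl, rfl⟩
  -- diagonal sums
  have hdiagsum : ∀ (κ : Measure E2), IsProbabilityMeasure κ →
      ∑' k : ℤ × ℤ, κ (A k) * κ (A k) ≤ (κ.prod κ) {p : E2 × E2 | ‖p.1 - p.2‖ ≤ 2 * t} := by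
    intro κ hκ
    have h1 : ∀ k : ℤ × ℤ, κ (A k) * κ (A k) = (κ.prod κ) ((A k) ×ˢ (A k)) := fun k =>
      (Measure.prod_prod _ _).symm
    rw [tsum_congr h1, ← measure_iUnion hdisj (fun k => (hAm k).prod (hAm k))]
    apply measure_mono
    rintro ⟨x, y⟩ hxy
    simp only [Set.mem_iUnion] at hxy
    obtain ⟨k, hx, hy⟩ := hxy
    exact hsame k x hx y hy
  calc (μ.prod ν) {p : E2 × E2 | ‖p.1 - p.2‖ ≤ t}
      ≤ (μ.prod ν) (⋃ d ∈ D, ⋃ k : ℤ × ℤ, (A (k + d)) ×ˢ (A k)) := measure_mono hcover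
    _ ≤ ∑ d ∈ D, (μ.prod ν) (⋃ k : ℤ × ℤ, (A (k + d)) ×ˢ (A k)) :=
        measure_biUnion_finset_le D _
    _ ≤ ∑ d ∈ D, ((μ.prod μ) {p : E2 × E2 | ‖p.1 - p.2‖ ≤ 2 * t}
        + (ν.prod ν) {p : E2 × E2 | ‖p.1 - p.2‖ ≤ 2 * t}) := by
        apply Finset.sum_le_sum
        intro d _
        calc (μ.prod ν) (⋃ k : ℤ × ℤ, (A (k + d)) ×ˢ (A k))
            ≤ ∑' k : ℤ × ℤ, (μ.prod ν) ((A (k + d)) ×ˢ (A k)) := measure_iUnion_le _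
          _ = ∑' k : ℤ × ℤ, μ (A (k + d)) * ν (A k) := by
              exact tsum_congr fun k => Measure.prod_prod _ _
          _ ≤ ∑' k : ℤ × ℤ, (μ (A (k + d)) * μ (A (k + d)) + ν (A k) * ν (A k)) :=
              ENNReal.tsum_le_tsum fun k => mul_le_add_sq _ _
          _ = (∑' k : ℤ × ℤ, μ (A (k + d)) * μ (A (k + d)))
              + ∑' k : ℤ × ℤ, ν (A k) * ν (A k) := ENNReal.tsum_add
          _ = (∑' k : ℤ × ℤ, μ (A k) * μ (A k)) + ∑' k : ℤ × ℤ, ν (A k) * ν (A k) := by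
              congr 1
              exact (Equiv.addRight d).tsum_eq (fun k => μ (A k) * μ (A k))
          _ ≤ (μ.prod μ) {p : E2 × E2 | ‖p.1 - p.2‖ ≤ 2 * t}
              + (ν.prod ν) {p : E2 × E2 | ‖p.1 - p.2‖ ≤ 2 * t} :=
              add_le_add (hdiagsum μ ‹_›) (hdiagsum ν ‹_›)
    _ = 9 * ((μ.prod μ) {p : E2 × E2 | ‖p.1 - p.2‖ ≤ 2 * t}
        + (ν.prod ν) {p : E2 × E2 | ‖p.1 - p.2‖ ≤ 2 * t}) := by
        rw [Finset.sum_const, hD]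
        have : (Finset.Icc (-1 : ℤ) 1 ×ˢ Finset.Icc (-1 : ℤ) 1).card = 9 := by decide
        rw [this]
        rw [nsmul_eq_mul]
        norm_cast

def Hr (p : E2 × E2) : ℝ := V (p.1 - p.2) + (‖p.1‖ ^ 2 + ‖p.2‖ ^ 2) / 2

def Wfn (p : E2 × E2) : ℝ≥0∞ :=
  if p.1 = p.2 then (⊤ : ℝ≥0∞) else ENNReal.ofReal (Hr p)

lemma Ienergy_eq (μ : Measure E2) : Ienergy μ = ∫⁻ p, Wfn p ∂(μ.prod μ) := rfl

lemma measurable_Hr : Measurable Hr := by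
  apply Measurable.add
  · exact measurable_V.comp (measurable_fst.sub measurable_snd)
  · exact ((measurable_fst.norm.pow_const 2).add (measurable_snd.norm.pow_const 2)).div_const 2

lemma measurableSet_diag2 : MeasurableSet {p : E2 × E2 | p.1 = p.2} :=
  (isClosed_eq continuous_fst continuous_snd).measurableSet

lemma measurable_Wfn : Measurable Wfn :=
  Measurable.ite measurableSet_diag2 measurable_const measurable_Hr.ennreal_ofReal

lemma Wfn_swap (p : E2 × E2) : Wfn p.swap = Wfn p := by
  rcases eq_or_ne p.1 p.2 with h | h
  · simp [Wfn, Prod.swap, h, eq_comm]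
  · have h' : p.2 ≠ p.1 := fun hh => h hh.symm
    simp only [Wfn, Prod.swap, if_neg h, if_neg h']
    congr 1
    simp only [Hr]
    rw [show (p.2 - p.1 : E2) = -(p.1 - p.2) by abel, V_neg_eq]
    ring

lemma lint_Wfn_swap (κ lam : Measure E2) [SFinite κ] [SFinite lam] :
    ∫⁻ p, Wfn p ∂(κ.prod lam) = ∫⁻ p, Wfn p ∂(lam.prod κ) := by
  have h := lintegral_prod_swap (μ := lam) (ν := κ) Wfn
  rw [← h]
  exact lintegral_congr fun p => (Wfn_swap p).symm

lemma diag_null_of_ne_top (μ : Measure E2) (ha : ∫⁻ p, Wfn p ∂(μ.prod μ) ≠ ⊤) :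
    (μ.prod μ) {p : E2 × E2 | p.1 = p.2} = 0 := by
  by_contra h
  apply ha
  have h1 : ∫⁻ p in {p : E2 × E2 | p.1 = p.2}, Wfn p ∂(μ.prod μ) ≤ ∫⁻ p, Wfn p ∂(μ.prod μ) :=
    setLIntegral_le_lintegral _ _
  have h2 : ∫⁻ p in {p : E2 × E2 | p.1 = p.2}, Wfn p ∂(μ.prod μ) = ⊤ := by
    have hcg := setLIntegral_congr_fun (μ := μ.prod μ) (f := Wfn) (g := fun _ => (⊤ : ℝ≥0∞))
      measurableSet_diag2
      (fun p (hp : p.1 = p.2) => (show Wfn p = ⊤ by rw [Wfn, if_pos hp]))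
    rw [hcg, setLIntegral_const]
    exact ENNReal.top_mul h
  exact top_unique (h2 ▸ h1)

lemma atoms_zero (μ : Measure E2) [SFinite μ]
    (hd : (μ.prod μ) {p : E2 × E2 | p.1 = p.2} = 0) (x : E2) : μ {x} = 0 := by
  have hsub : ({x} : Set E2) ×ˢ ({x} : Set E2) ⊆ {p : E2 × E2 | p.1 = p.2} := by
    rintro ⟨a, b⟩ ⟨ha, hb⟩
    simp only [Set.mem_singleton_iff] at ha hb
    simp [Set.mem_setOf_eq, ha, hb]
  have h0 : (μ.prod μ) (({x} : Set E2) ×ˢ ({x} : Set E2)) = 0 := measure_mono_null hsub hd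
  rw [Measure.prod_prod] at h0
  exact mul_self_eq_zero.mp h0

lemma prod_diag_null (κ μ : Measure E2) [SFinite μ] (h : ∀ x : E2, μ {x} = 0) :
    (κ.prod μ) {p : E2 × E2 | p.1 = p.2} = 0 := by
  rw [Measure.prod_apply measurableSet_diag2]
  have hpre : ∀ x : E2, (Prod.mk x ⁻¹' {p : E2 × E2 | p.1 = p.2}) = {x} := by
    intro x; ext y; simp [eq_comm]
  simp only [hpre, h]
  exact lintegral_zero

lemma ae_offdiag (ρ : Measure (E2 × E2)) (h : ρ {p : E2 × E2 | p.1 = p.2} = 0) :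
    ∀ᵐ p ∂ρ, p.1 ≠ p.2 := by
  rw [ae_iff]
  convert h using 2
  ext p; simp [not_not]

lemma lint_Wfn_eq_ofReal (ρ : Measure (E2 × E2)) (h : ρ {p : E2 × E2 | p.1 = p.2} = 0) :
    ∫⁻ p, Wfn p ∂ρ = ∫⁻ p, ENNReal.ofReal (Hr p) ∂ρ := by
  apply lintegral_congr_ae
  filter_upwards [ae_offdiag ρ h] with p hp
  exact if_neg hp

lemma ofReal_max0 (x : ℝ) : ENNReal.ofReal (max x 0) = ENNReal.ofReal x := by
  rcases le_total x 0 with h | h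
  · rw [max_eq_right h, ENNReal.ofReal_zero, eq_comm, ENNReal.ofReal_eq_zero]; exact h
  · rw [max_eq_left h]

lemma lint_fst (κ lam : Measure E2) [SFinite κ] [SFinite lam] [IsProbabilityMeasure lam]
    (g : E2 → ℝ≥0∞) (hg : Measurable g) :
    ∫⁻ p : E2 × E2, g p.1 ∂(κ.prod lam) = ∫⁻ x, g x ∂κ := by
  have hf : AEMeasurable (fun p : E2 × E2 => g p.1) (κ.prod lam) :=
    (hg.comp measurable_fst).aemeasurable
  rw [lintegral_prod _ hf]
  simp [lintegral_const, measure_univ, mul_one]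

lemma lint_snd (κ lam : Measure E2) [SFinite κ] [SFinite lam] [IsProbabilityMeasure κ]
    (g : E2 → ℝ≥0∞) (hg : Measurable g) :
    ∫⁻ p : E2 × E2, g p.2 ∂(κ.prod lam) = ∫⁻ y, g y ∂lam := by
  have hf : AEMeasurable (fun p : E2 × E2 => g p.2) (κ.prod lam) :=
    (hg.comp measurable_snd).aemeasurable
  rw [lintegral_prod _ hf]
  simp [lintegral_const, measure_univ, mul_one]

lemma Lg_le_Wfn (ρ : Measure (E2 × E2)) (h : ρ {p : E2 × E2 | p.1 = p.2} = 0) :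
    ∫⁻ p, ENNReal.ofReal (-Real.log ‖p.1 - p.2‖) ∂ρ ≤ ∫⁻ p, Wfn p ∂ρ := by
  apply lintegral_mono_ae
  filter_upwards [ae_offdiag ρ h] with p hp
  rw [show Wfn p = ENNReal.ofReal (Hr p) from if_neg hp,
    ← ofReal_max0 (-Real.log ‖p.1 - p.2‖)]
  exact ENNReal.ofReal_le_ofReal (key_lower_log p.1 p.2 hp)

lemma moment_le (μ : Measure E2) [IsProbabilityMeasure μ]
    (hd : (μ.prod μ) {p : E2 × E2 | p.1 = p.2} = 0) :
    ∫⁻ x, ENNReal.ofReal (‖x‖ ^ 2) ∂μ ≤ 8 * ∫⁻ p, Wfn p ∂(μ.prod μ) := by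
  have h1 : ∫⁻ p : E2 × E2, ENNReal.ofReal (‖p.1‖ ^ 2 / 8) ∂(μ.prod μ)
      ≤ ∫⁻ p, Wfn p ∂(μ.prod μ) := by
    apply lintegral_mono_ae
    filter_upwards [ae_offdiag _ hd] with p hp
    rw [show Wfn p = ENNReal.ofReal (Hr p) from if_neg hp]
    apply ENNReal.ofReal_le_ofReal
    have := key_lower_quad p.1 p.2 hp
    have h2 : ‖p.1‖ ^ 2 / 8 ≤ (‖p.1‖ ^ 2 + ‖p.2‖ ^ 2) / 8 := by nlinarith [sq_nonneg ‖p.2‖]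
    exact h2.trans this
  have h3 : ∫⁻ p : E2 × E2, ENNReal.ofReal (‖p.1‖ ^ 2 / 8) ∂(μ.prod μ)
      = ∫⁻ x, ENNReal.ofReal (‖x‖ ^ 2 / 8) ∂μ :=
    lint_fst μ μ _ (((measurable_norm.pow_const 2).div_const 8).ennreal_ofReal)
  have h4 : ∫⁻ x, ENNReal.ofReal (‖x‖ ^ 2) ∂μ = 8 * ∫⁻ x, ENNReal.ofReal (‖x‖ ^ 2 / 8) ∂μ := by
    rw [← lintegral_const_mul 8 (((measurable_norm.pow_const 2).div_const 8).ennreal_ofReal)]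
    apply lintegral_congr
    intro x
    rw [show (8 : ℝ≥0∞) = ENNReal.ofReal (8 : ℝ) by norm_num,
      ← ENNReal.ofReal_mul (by norm_num : (0:ℝ) ≤ 8)]
    congr 1
    ring
  rw [h3] at h1
  rw [h4]
  exact mul_le_mul_right h1 8

lemma measurableSet_ball2 (c : ℝ) : MeasurableSet {p : E2 × E2 | ‖p.1 - p.2‖ ≤ c} :=
  measurableSet_le (measurable_fst.sub measurable_snd).norm measurable_const

lemma upper_count_bound (κ : Measure E2) [IsProbabilityMeasure κ]
    (hd : (κ.prod κ) {p : E2 × E2 | p.1 = p.2} = 0) :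
    ∑' n : ℕ, (κ.prod κ) {p : E2 × E2 | ‖p.1 - p.2‖ ≤ 2 * Real.exp (-(n:ℝ))}
      ≤ ENNReal.ofReal (1 + Real.log 2)
        + ∫⁻ p, ENNReal.ofReal (-Real.log ‖p.1 - p.2‖) ∂(κ.prod κ) := by
  have hstep : ∑' n : ℕ, (κ.prod κ) {p : E2 × E2 | ‖p.1 - p.2‖ ≤ 2 * Real.exp (-(n:ℝ))}
      = ∫⁻ p, (∑' n : ℕ, Set.indicator
          {p : E2 × E2 | ‖p.1 - p.2‖ ≤ 2 * Real.exp (-(n:ℝ))} (fun _ => (1:ℝ≥0∞)) p)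
        ∂(κ.prod κ) := by
    rw [lintegral_tsum (fun n => (measurable_const.indicator (measurableSet_ball2 _)).aemeasurable)]
    exact tsum_congr fun n => (lintegral_indicator_one (measurableSet_ball2 _)).symm
  rw [hstep]
  have hbound : ∀ᵐ p ∂(κ.prod κ),
      (∑' n : ℕ, Set.indicator
          {p : E2 × E2 | ‖p.1 - p.2‖ ≤ 2 * Real.exp (-(n:ℝ))} (fun _ => (1:ℝ≥0∞)) p)
      ≤ ENNReal.ofReal (1 + Real.log 2) + ENNReal.ofReal (-Real.log ‖p.1 - p.2‖) := by
    filter_upwards [ae_offdiag _ hd] with p hp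
    set r := ‖p.1 - p.2‖ with hr
    have hrpos : 0 < r := by
      rw [hr]; exact norm_pos_iff.2 (sub_ne_zero.2 hp)
    have hiff : ∀ n : ℕ, (p ∈ {p : E2 × E2 | ‖p.1 - p.2‖ ≤ 2 * Real.exp (-(n:ℝ))})
        ↔ ((n:ℝ) ≤ Real.log 2 - Real.log r) := by
      intro n
      have h1 : 2 * Real.exp (-(n:ℝ)) = Real.exp (Real.log 2 + -(n:ℝ)) := by
        rw [Real.exp_add, Real.exp_log two_pos]
      constructor
      · intro hmem
        have : r ≤ Real.exp (Real.log 2 + -(n:ℝ)) := by rw [← h1]; exact hmem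
        have := (Real.log_le_iff_le_exp hrpos).2 this
        linarith
      · intro hle
        show r ≤ 2 * Real.exp (-(n:ℝ))
        rw [h1]
        exact (Real.log_le_iff_le_exp hrpos).1 (by linarith)
    calc (∑' n : ℕ, Set.indicator
          {p : E2 × E2 | ‖p.1 - p.2‖ ≤ 2 * Real.exp (-(n:ℝ))} (fun _ => (1:ℝ≥0∞)) p)
        = ∑' n : ℕ, (if (n:ℝ) ≤ Real.log 2 - Real.log r then (1:ℝ≥0∞) else 0) := by
          apply tsum_congr; intro n
          rw [Set.indicator_apply]
          exact if_congr (hiff n) rfl rfl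
      _ ≤ ENNReal.ofReal ((Real.log 2 - Real.log r) + 1) := tsum_ind_upper _
      _ ≤ ENNReal.ofReal (1 + Real.log 2) + ENNReal.ofReal (-Real.log r) := by
          rw [show (Real.log 2 - Real.log r) + 1 = (1 + Real.log 2) + (-Real.log r) by ring]
          exact ENNReal.ofReal_add_le
  calc ∫⁻ p, (∑' n : ℕ, Set.indicator
          {p : E2 × E2 | ‖p.1 - p.2‖ ≤ 2 * Real.exp (-(n:ℝ))} (fun _ => (1:ℝ≥0∞)) p)
        ∂(κ.prod κ)
      ≤ ∫⁻ p, (ENNReal.ofReal (1 + Real.log 2)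
          + ENNReal.ofReal (-Real.log ‖p.1 - p.2‖)) ∂(κ.prod κ) := lintegral_mono_ae hbound
    _ = ENNReal.ofReal (1 + Real.log 2)
          + ∫⁻ p, ENNReal.ofReal (-Real.log ‖p.1 - p.2‖) ∂(κ.prod κ) := by
        rw [lintegral_add_left measurable_const, lintegral_const, measure_univ, mul_one]

lemma cross_log_bound (μ ν : Measure E2) [IsProbabilityMeasure μ] [IsProbabilityMeasure ν]
    (hdμ : (μ.prod μ) {p : E2 × E2 | p.1 = p.2} = 0)
    (hdν : (ν.prod ν) {p : E2 × E2 | p.1 = p.2} = 0) :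
    ∫⁻ p, ENNReal.ofReal (-Real.log ‖p.1 - p.2‖) ∂(μ.prod ν)
      ≤ 9 * ((ENNReal.ofReal (1 + Real.log 2)
            + ∫⁻ p, ENNReal.ofReal (-Real.log ‖p.1 - p.2‖) ∂(μ.prod μ))
          + (ENNReal.ofReal (1 + Real.log 2)
            + ∫⁻ p, ENNReal.ofReal (-Real.log ‖p.1 - p.2‖) ∂(ν.prod ν))) := by
  have hpt : ∀ p : E2 × E2, ENNReal.ofReal (-Real.log ‖p.1 - p.2‖)
      ≤ ∑' n : ℕ, Set.indicator
          {p : E2 × E2 | ‖p.1 - p.2‖ ≤ Real.exp (-(n:ℝ))} (fun _ => (1:ℝ≥0∞)) p := by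
    intro p
    set r := ‖p.1 - p.2‖ with hr
    rcases eq_or_lt_of_le (norm_nonneg (p.1 - p.2)) with h0 | hrpos
    · rw [hr, ← h0, Real.log_zero, neg_zero, ENNReal.ofReal_zero]
      exact zero_le
    · calc ENNReal.ofReal (-Real.log r)
          ≤ ∑' n : ℕ, (if (n:ℝ) ≤ -Real.log r then (1:ℝ≥0∞) else 0) := tsum_ind_lower _
        _ = _ := by
            apply tsum_congr; intro n
            rw [Set.indicator_apply]
            apply if_congr _ rfl rfl
            show (n:ℝ) ≤ -Real.log r ↔ r ≤ Real.exp (-(n:ℝ))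
            constructor
            · intro h; exact (Real.log_le_iff_le_exp hrpos).1 (by linarith)
            · intro h; have h2 := (Real.log_le_iff_le_exp hrpos).2 h; linarith
  calc ∫⁻ p, ENNReal.ofReal (-Real.log ‖p.1 - p.2‖) ∂(μ.prod ν)
      ≤ ∫⁻ p, (∑' n : ℕ, Set.indicator
          {p : E2 × E2 | ‖p.1 - p.2‖ ≤ Real.exp (-(n:ℝ))} (fun _ => (1:ℝ≥0∞)) p)
          ∂(μ.prod ν) := lintegral_mono hpt
    _ = ∑' n : ℕ, (μ.prod ν) {p : E2 × E2 | ‖p.1 - p.2‖ ≤ Real.exp (-(n:ℝ))} := by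
        rw [lintegral_tsum
          (fun n => (measurable_const.indicator (measurableSet_ball2 _)).aemeasurable)]
        exact tsum_congr fun n => lintegral_indicator_one (measurableSet_ball2 _)
    _ ≤ ∑' n : ℕ, 9 * ((μ.prod μ) {p : E2 × E2 | ‖p.1 - p.2‖ ≤ 2 * Real.exp (-(n:ℝ))}
          + (ν.prod ν) {p : E2 × E2 | ‖p.1 - p.2‖ ≤ 2 * Real.exp (-(n:ℝ))}) :=
        ENNReal.tsum_le_tsum fun n => grid_bound μ ν (Real.exp_pos _)
    _ = 9 * ((∑' n : ℕ, (μ.prod μ) {p : E2 × E2 | ‖p.1 - p.2‖ ≤ 2 * Real.exp (-(n:ℝ))})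
          + (∑' n : ℕ, (ν.prod ν) {p : E2 × E2 | ‖p.1 - p.2‖ ≤ 2 * Real.exp (-(n:ℝ))})) := by
        rw [ENNReal.tsum_mul_left, ENNReal.tsum_add]
    _ ≤ _ := by
        apply mul_le_mul_right
        exact add_le_add (upper_count_bound μ hdμ) (upper_count_bound ν hdν)

lemma cross_finite (μ ν : Measure E2) [IsProbabilityMeasure μ] [IsProbabilityMeasure ν]
    (hdμ : (μ.prod μ) {p : E2 × E2 | p.1 = p.2} = 0)
    (hdν : (ν.prod ν) {p : E2 × E2 | p.1 = p.2} = 0)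
    (hdμν : (μ.prod ν) {p : E2 × E2 | p.1 = p.2} = 0)
    (ha : ∫⁻ p, Wfn p ∂(μ.prod μ) ≠ ⊤) (hc : ∫⁻ p, Wfn p ∂(ν.prod ν) ≠ ⊤) :
    ∫⁻ p, Wfn p ∂(μ.prod ν) ≠ ⊤ := by
  have hbound : ∀ᵐ p ∂(μ.prod ν), Wfn p ≤ ENNReal.ofReal 1
      + ENNReal.ofReal (-Real.log ‖p.1 - p.2‖)
      + ENNReal.ofReal (‖p.1‖ ^ 2) + ENNReal.ofReal (‖p.2‖ ^ 2) := by
    filter_upwards [ae_offdiag _ hdμν] with p hp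
    rw [show Wfn p = ENNReal.ofReal (Hr p) from if_neg hp]
    have h1 : Hr p ≤ (1 + max (-Real.log ‖p.1 - p.2‖) 0) + (‖p.1‖ ^ 2 + ‖p.2‖ ^ 2) / 2 := by
      have := key_upper p.1 p.2 hp
      simp only [Hr]; linarith
    calc ENNReal.ofReal (Hr p)
        ≤ ENNReal.ofReal ((1 + max (-Real.log ‖p.1 - p.2‖) 0)
            + (‖p.1‖ ^ 2 + ‖p.2‖ ^ 2) / 2) := ENNReal.ofReal_le_ofReal h1
      _ ≤ ENNReal.ofReal (1 + max (-Real.log ‖p.1 - p.2‖) 0)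
            + ENNReal.ofReal ((‖p.1‖ ^ 2 + ‖p.2‖ ^ 2) / 2) := ENNReal.ofReal_add_le
      _ ≤ (ENNReal.ofReal 1 + ENNReal.ofReal (max (-Real.log ‖p.1 - p.2‖) 0))
            + (ENNReal.ofReal (‖p.1‖ ^ 2) + ENNReal.ofReal (‖p.2‖ ^ 2)) := by
          apply add_le_add ENNReal.ofReal_add_le
          rw [← ENNReal.ofReal_add (sq_nonneg _) (sq_nonneg _)]
          apply ENNReal.ofReal_le_ofReal
          nlinarith [sq_nonneg ‖p.1‖, sq_nonneg ‖p.2‖]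
      _ = _ := by rw [ofReal_max0]; ring
  have hm2 : Measurable fun p : E2 × E2 => ENNReal.ofReal (-Real.log ‖p.1 - p.2‖) :=
    ((Real.measurable_log.comp (measurable_fst.sub measurable_snd).norm).neg).ennreal_ofReal
  have hm3 : Measurable fun p : E2 × E2 => ENNReal.ofReal (‖p.1‖ ^ 2) :=
    (measurable_fst.norm.pow_const 2).ennreal_ofReal
  have hsplit : ∫⁻ p, (ENNReal.ofReal 1
      + ENNReal.ofReal (-Real.log ‖p.1 - p.2‖)
      + ENNReal.ofReal (‖p.1‖ ^ 2) + ENNReal.ofReal (‖p.2‖ ^ 2)) ∂(μ.prod ν)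
      = ENNReal.ofReal 1
        + ∫⁻ p, ENNReal.ofReal (-Real.log ‖p.1 - p.2‖) ∂(μ.prod ν)
        + ∫⁻ x, ENNReal.ofReal (‖x‖ ^ 2) ∂μ + ∫⁻ y, ENNReal.ofReal (‖y‖ ^ 2) ∂ν := by
    rw [lintegral_add_left (show Measurable fun p : E2 × E2 => ENNReal.ofReal 1
          + ENNReal.ofReal (-Real.log ‖p.1 - p.2‖) + ENNReal.ofReal (‖p.1‖ ^ 2) from
          (measurable_const.add hm2).add hm3),
      lintegral_add_left (show Measurable fun p : E2 × E2 => ENNReal.ofReal 1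
          + ENNReal.ofReal (-Real.log ‖p.1 - p.2‖) from measurable_const.add hm2), lintegral_add_left measurable_const,
      lintegral_const, measure_univ, mul_one,
      lint_fst μ ν _ ((measurable_norm.pow_const 2).ennreal_ofReal),
      lint_snd μ ν _ ((measurable_norm.pow_const 2).ennreal_ofReal)]
  have hfin : ENNReal.ofReal 1
        + ∫⁻ p, ENNReal.ofReal (-Real.log ‖p.1 - p.2‖) ∂(μ.prod ν)
        + ∫⁻ x, ENNReal.ofReal (‖x‖ ^ 2) ∂μ + ∫⁻ y, ENNReal.ofReal (‖y‖ ^ 2) ∂ν ≠ ⊤ := by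
    have f1 : ∫⁻ p, ENNReal.ofReal (-Real.log ‖p.1 - p.2‖) ∂(μ.prod ν) ≠ ⊤ := by
      refine ne_top_of_le_ne_top ?_ (cross_log_bound μ ν hdμ hdν)
      refine ENNReal.mul_ne_top (by norm_num) (ENNReal.add_ne_top.2 ⟨?_, ?_⟩)
      · exact ENNReal.add_ne_top.2 ⟨ENNReal.ofReal_ne_top,
          ne_top_of_le_ne_top ha (Lg_le_Wfn _ hdμ)⟩
      · exact ENNReal.add_ne_top.2 ⟨ENNReal.ofReal_ne_top,
          ne_top_of_le_ne_top hc (Lg_le_Wfn _ hdν)⟩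
    have f2 : ∫⁻ x, ENNReal.ofReal (‖x‖ ^ 2) ∂μ ≠ ⊤ :=
      ne_top_of_le_ne_top (ENNReal.mul_ne_top (by norm_num) ha) (moment_le μ hdμ)
    have f3 : ∫⁻ y, ENNReal.ofReal (‖y‖ ^ 2) ∂ν ≠ ⊤ :=
      ne_top_of_le_ne_top (ENNReal.mul_ne_top (by norm_num) hc) (moment_le ν hdν)
    simp only [ne_eq, ENNReal.add_eq_top, not_or]
    exact ⟨⟨⟨ENNReal.ofReal_ne_top, f1⟩, f2⟩, f3⟩
  exact ((lintegral_mono_ae hbound).trans_lt (by rw [hsplit]; exact lt_top_iff_ne_top.2 hfin)).ne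

lemma lintegral_prod_mix (f : E2 × E2 → ℝ≥0∞) (hf : Measurable f)
    (α β : Measure E2) [SFinite α] [SFinite β] (s r : ℝ≥0∞) :
    ∫⁻ p, f p ∂((s • α + r • β).prod (s • α + r • β)) =
      s * s * ∫⁻ p, f p ∂(α.prod α) + s * r * ∫⁻ p, f p ∂(α.prod β)
        + r * s * ∫⁻ p, f p ∂(β.prod α) + r * r * ∫⁻ p, f p ∂(β.prod β) := by
  have hF1 : Measurable fun x => ∫⁻ y, f (x, y) ∂α := hf.lintegral_prod_right'
  have hF2 : Measurable fun x => ∫⁻ y, f (x, y) ∂β := hf.lintegral_prod_right'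
  have hinner : ∀ x, ∫⁻ y, f (x, y) ∂(s • α + r • β)
      = s * ∫⁻ y, f (x, y) ∂α + r * ∫⁻ y, f (x, y) ∂β := by
    intro x; rw [lintegral_add_measure, lintegral_smul_measure, lintegral_smul_measure, smul_eq_mul,
      smul_eq_mul]
  have eAA : ∫⁻ x, ∫⁻ y, f (x, y) ∂α ∂α = ∫⁻ p, f p ∂(α.prod α) :=
    (lintegral_prod _ hf.aemeasurable).symm
  have eAB : ∫⁻ x, ∫⁻ y, f (x, y) ∂β ∂α = ∫⁻ p, f p ∂(α.prod β) :=
    (lintegral_prod _ hf.aemeasurable).symm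
  have eBA : ∫⁻ x, ∫⁻ y, f (x, y) ∂α ∂β = ∫⁻ p, f p ∂(β.prod α) :=
    (lintegral_prod _ hf.aemeasurable).symm
  have eBB : ∫⁻ x, ∫⁻ y, f (x, y) ∂β ∂β = ∫⁻ p, f p ∂(β.prod β) :=
    (lintegral_prod _ hf.aemeasurable).symm
  rw [lintegral_prod _ hf.aemeasurable]
  simp_rw [hinner]
  rw [lintegral_add_measure, lintegral_smul_measure, lintegral_smul_measure,
    lintegral_add_left (hF1.const_mul s), lintegral_add_left (hF1.const_mul s),
    lintegral_const_mul s hF1, lintegral_const_mul r hF2, eAA, eAB,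
    lintegral_const_mul s hF1, lintegral_const_mul r hF2, eBA, eBB]
  ring

lemma isProb_mix (μ ν : Measure E2) [IsProbabilityMeasure μ] [IsProbabilityMeasure ν]
    (s r : ℝ≥0∞) (h : s + r = 1) : IsProbabilityMeasure (s • μ + r • ν) := by
  constructor
  simp only [Measure.add_apply, Measure.smul_apply, measure_univ, smul_eq_mul, mul_one]
  exact h

lemma energy_le_cross (μ ν : Measure E2) [IsProbabilityMeasure μ] [IsProbabilityMeasure ν]
    (hmin : ∀ ν' : Measure E2, IsProbabilityMeasure ν' → Ienergy μ ≤ Ienergy ν')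
    (ha : ∫⁻ p, Wfn p ∂(μ.prod μ) ≠ ⊤) (hc : ∫⁻ p, Wfn p ∂(ν.prod ν) ≠ ⊤)
    (hb : ∫⁻ p, Wfn p ∂(μ.prod ν) ≠ ⊤) :
    ∫⁻ p, Wfn p ∂(μ.prod μ) ≤ ∫⁻ p, Wfn p ∂(μ.prod ν) := by
  by_contra hlt
  push_neg at hlt
  set aE := ∫⁻ p, Wfn p ∂(μ.prod μ) with haE
  set bE := ∫⁻ p, Wfn p ∂(μ.prod ν) with hbE
  set cE := ∫⁻ p, Wfn p ∂(ν.prod ν) with hcE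
  set A := aE.toReal with hA
  set B := bE.toReal with hB
  set C := cE.toReal with hC
  have hBA : B < A := by
    rw [hA, hB]; exact (ENNReal.toReal_lt_toReal hb ha).2 hlt
  have hAC : A ≤ C := by
    rw [hA, hC]
    refine (ENNReal.toReal_le_toReal ha hc).2 ?_
    have := hmin ν ‹_›
    rwa [Ienergy_eq, Ienergy_eq] at this
  have hD : 0 < A - 2 * B + C := by linarith
  set tR : ℝ := (A - B) / (A - 2 * B + C) with htR
  have ht0 : 0 < tR := div_pos (by linarith) hD
  have ht1 : tR ≤ 1 / 2 := by
    rw [htR, div_le_iff₀ hD]; linarith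
  have hteq : tR * (A - 2 * B + C) = A - B := by
    rw [htR, div_mul_cancel₀ _ hD.ne']
  set s : ℝ≥0∞ := ENNReal.ofReal (1 - tR) with hs
  set rr : ℝ≥0∞ := ENNReal.ofReal tR with hrr
  have hsr : s + rr = 1 := by
    rw [hs, hrr, ← ENNReal.ofReal_add (by linarith) ht0.le]
    norm_num
  haveI hP := isProb_mix μ ν s rr hsr
  have hkey := hmin _ hP
  rw [Ienergy_eq, Ienergy_eq, lintegral_prod_mix Wfn measurable_Wfn μ ν s rr,
    lint_Wfn_swap ν μ] at hkey
  have hsne : s ≠ ⊤ := ENNReal.ofReal_ne_top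
  have hrne : rr ≠ ⊤ := ENNReal.ofReal_ne_top
  have hX : s * s * aE + s * rr * bE + rr * s * bE + rr * rr * cE ≠ ⊤ := by
    simp only [ne_eq, ENNReal.add_eq_top, not_or]
    refine ⟨⟨⟨?_, ?_⟩, ?_⟩, ?_⟩ <;>
      exact ENNReal.mul_ne_top (ENNReal.mul_ne_top (by assumption) (by assumption)) (by assumption)
  have hkeyR := (ENNReal.toReal_le_toReal ha hX).2 hkey
  have hts : s.toReal = 1 - tR := ENNReal.toReal_ofReal (by linarith)
  have htr : rr.toReal = tR := ENNReal.toReal_ofReal ht0.le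
  have hXval : (s * s * aE + s * rr * bE + rr * s * bE + rr * rr * cE).toReal
      = (1 - tR) * (1 - tR) * A + (1 - tR) * tR * B + tR * (1 - tR) * B + tR * tR * C := by
    rw [ENNReal.toReal_add, ENNReal.toReal_add, ENNReal.toReal_add]
    · simp only [ENNReal.toReal_mul, hts, htr, hA, hB, hC]
    all_goals
      first
        | exact ENNReal.mul_ne_top (ENNReal.mul_ne_top (by assumption) (by assumption))
            (by assumption)
        | (simp only [ne_eq, ENNReal.add_eq_top, not_or];
           refine ⟨?_, ?_⟩ <;>
             first
               | exact ENNReal.mul_ne_top (ENNReal.mul_ne_top (by assumption) (by assumption))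
                   (by assumption)
               | (refine ⟨?_, ?_⟩ <;>
                   exact ENNReal.mul_ne_top (ENNReal.mul_ne_top (by assumption) (by assumption))
                     (by assumption)))
  rw [hXval] at hkeyR
  have hfinal : (1 - tR) * (1 - tR) * A + (1 - tR) * tR * B + tR * (1 - tR) * B + tR * tR * C
      = A - tR * (A - B) := by linear_combination tR * hteq
  rw [hfinal] at hkeyR
  nlinarith [mul_pos ht0 (sub_pos.2 hBA)]

lemma Hr_nonneg_ae (ρ : Measure (E2 × E2)) (hd : ρ {p : E2 × E2 | p.1 = p.2} = 0) :
    0 ≤ᵐ[ρ] Hr := by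
  filter_upwards [ae_offdiag ρ hd] with p hp
  have h := key_lower_log p.1 p.2 hp
  have h0 : (0:ℝ) ≤ max (-Real.log ‖p.1 - p.2‖) 0 := le_max_right _ _
  show (0:ℝ) ≤ Hr p
  simp only [Hr]; linarith

lemma integrable_normsq (μ : Measure E2) [IsProbabilityMeasure μ]
    (hm2 : ∫⁻ x, ENNReal.ofReal (‖x‖ ^ 2) ∂μ ≠ ⊤) :
    Integrable (fun y : E2 => ‖y‖ ^ 2) μ := by
  refine ⟨(measurable_norm.pow_const 2).aestronglyMeasurable, ?_⟩
  rw [hasFiniteIntegral_iff_ofReal (ae_of_all _ fun y => sq_nonneg _)]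
  exact lt_top_iff_ne_top.2 hm2

lemma bochner_eq (κ μ : Measure E2) [IsProbabilityMeasure κ] [IsProbabilityMeasure μ]
    (hd : (κ.prod μ) {p : E2 × E2 | p.1 = p.2} = 0)
    (hfin : ∫⁻ p, Wfn p ∂(κ.prod μ) ≠ ⊤)
    (hm2 : ∫⁻ x, ENNReal.ofReal (‖x‖ ^ 2) ∂μ ≠ ⊤) :
    ∫ x, (Vconv μ x + ‖x‖ ^ 2 / 2) ∂κ
      = (∫⁻ p, Wfn p ∂(κ.prod μ)).toReal - (∫ y, ‖y‖ ^ 2 ∂μ) / 2 := by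
  have hnn := Hr_nonneg_ae _ hd
  have hlint_eq : ∫⁻ p, ENNReal.ofReal (Hr p) ∂(κ.prod μ) = ∫⁻ p, Wfn p ∂(κ.prod μ) :=
    (lint_Wfn_eq_ofReal _ hd).symm
  have hIntHr : Integrable Hr (κ.prod μ) := by
    refine ⟨measurable_Hr.aestronglyMeasurable, ?_⟩
    rw [hasFiniteIntegral_iff_ofReal hnn, hlint_eq]
    exact lt_top_iff_ne_top.2 hfin
  have hy2 : Integrable (fun y : E2 => ‖y‖ ^ 2) μ := integrable_normsq μ hm2
  set m2 : ℝ := ∫ y, ‖y‖ ^ 2 ∂μ with hm2def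
  -- a.e. identity for the inner integral
  have hae : ∀ᵐ x ∂κ, Vconv μ x + ‖x‖ ^ 2 / 2 = (∫ y, Hr (x, y) ∂μ) - m2 / 2 := by
    filter_upwards [hIntHr.prod_right_ae] with x hIx
    have hq : Integrable (fun y : E2 => (‖x‖ ^ 2 + ‖y‖ ^ 2) / 2) μ :=
      ((integrable_const (‖x‖ ^ 2)).add hy2).div_const 2
    have hVint : Integrable (fun y : E2 => V (x - y)) μ := by
      have heq : (fun y : E2 => V (x - y))
          = fun y : E2 => Hr (x, y) - (‖x‖ ^ 2 + ‖y‖ ^ 2) / 2 := by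
        funext y; simp only [Hr]; ring
      rw [heq]; exact hIx.sub hq
    have hsplit : ∫ y, Hr (x, y) ∂μ
        = (∫ y, V (x - y) ∂μ) + ∫ y, ((‖x‖ ^ 2 + ‖y‖ ^ 2) / 2) ∂μ := by
      have heq : (fun y : E2 => Hr (x, y))
          = fun y : E2 => V (x - y) + (‖x‖ ^ 2 + ‖y‖ ^ 2) / 2 := by
        funext y; simp only [Hr]
      rw [heq]; exact integral_add hVint hq
    have hqval : ∫ y, ((‖x‖ ^ 2 + ‖y‖ ^ 2) / 2) ∂μ = (‖x‖ ^ 2 + m2) / 2 := by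
      rw [integral_div, integral_add (integrable_const _) hy2, integral_const]
      simp [measure_univ, hm2def]
    rw [hsplit, hqval]
    show Vconv μ x + ‖x‖ ^ 2 / 2 = Vconv μ x + (‖x‖ ^ 2 + m2) / 2 - m2 / 2
    ring
  have hg : Integrable (fun x => ∫ y, Hr (x, y) ∂μ) κ := hIntHr.integral_prod_left
  calc ∫ x, (Vconv μ x + ‖x‖ ^ 2 / 2) ∂κ
      = ∫ x, ((∫ y, Hr (x, y) ∂μ) - m2 / 2) ∂κ := integral_congr_ae hae
    _ = (∫ x, ∫ y, Hr (x, y) ∂μ ∂κ) - ∫ _x, m2 / 2 ∂κ :=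
        integral_sub hg (integrable_const _)
    _ = (∫ p, Hr p ∂(κ.prod μ)) - m2 / 2 := by
        rw [← integral_prod _ hIntHr, integral_const]
        simp [measure_univ]
    _ = (∫⁻ p, Wfn p ∂(κ.prod μ)).toReal - m2 / 2 := by
        rw [integral_eq_lintegral_of_nonneg_ae hnn measurable_Hr.aestronglyMeasurable, hlint_eq]

/-- First-variation inequality at a minimiser `μ` of `I`: for every compactly
supported probability measure `ν` with `I(ν) < ∞`,
`∫ ((V ∗ μ) + |x|²/2) dν ≥ ∫ ((V ∗ μ) + |x|²/2) dμ`. -/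
theorem first_variation_inequality (μ : Measure E2)
    (hμ : IsProbabilityMeasure μ)
    (hmin : ∀ ν' : Measure E2, IsProbabilityMeasure ν' → Ienergy μ ≤ Ienergy ν')
    (ν : Measure E2) (hν : IsProbabilityMeasure ν)
    (hνc : HasCompactMeasureSupport ν) (hνe : Ienergy ν < ⊤) :
    ∫ x, (Vconv μ x + ‖x‖ ^ 2 / 2) ∂μ ≤ ∫ x, (Vconv μ x + ‖x‖ ^ 2 / 2) ∂ν := by
  have ha : Ienergy μ ≠ ⊤ := ((hmin ν hν).trans_lt hνe).ne
  have haL : ∫⁻ p, Wfn p ∂(μ.prod μ) ≠ ⊤ := by rw [← Ienergy_eq]; exact ha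
  have hcL : ∫⁻ p, Wfn p ∂(ν.prod ν) ≠ ⊤ := by rw [← Ienergy_eq]; exact hνe.ne
  have hdμ : (μ.prod μ) {p : E2 × E2 | p.1 = p.2} = 0 := diag_null_of_ne_top μ haL
  have hdν : (ν.prod ν) {p : E2 × E2 | p.1 = p.2} = 0 := diag_null_of_ne_top ν hcL
  have hatomμ : ∀ x : E2, μ {x} = 0 := atoms_zero μ hdμ
  have hatomν : ∀ x : E2, ν {x} = 0 := atoms_zero ν hdν
  have hdμν : (μ.prod ν) {p : E2 × E2 | p.1 = p.2} = 0 := prod_diag_null μ ν hatomν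
  have hdνμ : (ν.prod μ) {p : E2 × E2 | p.1 = p.2} = 0 := prod_diag_null ν μ hatomμ
  have hbL : ∫⁻ p, Wfn p ∂(μ.prod ν) ≠ ⊤ := cross_finite μ ν hdμ hdν hdμν haL hcL
  have hbL' : ∫⁻ p, Wfn p ∂(ν.prod μ) ≠ ⊤ := by
    rw [← lint_Wfn_swap μ ν]; exact hbL
  have hm2 : ∫⁻ x, ENNReal.ofReal (‖x‖ ^ 2) ∂μ ≠ ⊤ :=
    ne_top_of_le_ne_top (ENNReal.mul_ne_top (by norm_num) haL) (moment_le μ hdμ)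
  have hkey : ∫⁻ p, Wfn p ∂(μ.prod μ) ≤ ∫⁻ p, Wfn p ∂(μ.prod ν) :=
    energy_le_cross μ ν hmin haL hcL hbL
  have e1 : ∫ x, (Vconv μ x + ‖x‖ ^ 2 / 2) ∂μ
      = (∫⁻ p, Wfn p ∂(μ.prod μ)).toReal - (∫ y, ‖y‖ ^ 2 ∂μ) / 2 :=
    bochner_eq μ μ hdμ haL hm2
  have e2 : ∫ x, (Vconv μ x + ‖x‖ ^ 2 / 2) ∂ν
      = (∫⁻ p, Wfn p ∂(ν.prod μ)).toReal - (∫ y, ‖y‖ ^ 2 ∂μ) / 2 :=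
    bochner_eq ν μ hdνμ hbL' hm2
  rw [e1, e2]
  have hmono : (∫⁻ p, Wfn p ∂(μ.prod μ)).toReal ≤ (∫⁻ p, Wfn p ∂(ν.prod μ)).toReal := by
    refine (ENNReal.toReal_le_toReal haL hbL').2 ?_
    calc ∫⁻ p, Wfn p ∂(μ.prod μ) ≤ ∫⁻ p, Wfn p ∂(μ.prod ν) := hkey
      _ = ∫⁻ p, Wfn p ∂(ν.prod μ) := lint_Wfn_swap μ ν
  linarith

end
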